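/- If 0 ≤ λ₁ ≤ 3, 0 ≤ λ₂ ≤ 3, and 0 ≤ λ₁ + λ₂ ≤ 3, then the function r(t) = λ₁ + 2(λ₂ - λ₁) t + 3(1 - λ₂) t² is nonnegative for all t ∈ [0,1]. -/
import Mathlib

theorem stmt_13 (l1 l2 : ℝ) (h1 : 0 ≤ l1) (h2 : l1 ≤ 3) (h3 : 0 ≤ l2) (h4 : l2 ≤ 3)
    (h5 : 0 ≤ l1 + l2) (h6 : l1 + l2 ≤ 3) :
    ∀ t ∈ Set.Icc (0:ℝ) 1, 0 ≤ l1 + 2 * (l2 - l1) * t + 3 * (1 - l2) * t ^ 2 := by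
  rintro t ⟨ht0, ht1⟩
  nlinarith [mul_nonneg h1 (sq_nonneg (1 - t)), mul_nonneg h3 (mul_nonneg ht0 (sub_nonneg.2 ht1)),
    mul_nonneg (sub_nonneg.2 h6) (sq_nonneg t)]
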